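/- Let 𝓗 be a complex Hilbert space, H and L bounded linear operators on 𝓗 with H self-adjoint, ψ ∈ 𝓗 a unit vector, and r a real number with 0 ≤ r ≤ 1. Set m := ⟨L + L†⟩ (which is a real number), A := −iH − (1/2)L†L + (1 − r²)·m·L, C := √(1 − r²)·L, Â := (3/8)⟨C + C†⟩² − (1/2)⟨A + A†⟩ − (1/2)⟨C†C⟩, and Ĉ := −(1/2)⟨C + C†⟩. Then the following operator identity holds: A + Â·I + Ĉ·C = −iH − (1/2)L†L + (1/2)(1 − r²)·m·L + ((1/2)r²⟨L†L⟩ − (1/8)(1 − r²)m²)·I. (This identity shows that the corrected unnormalized stochastic Schrödinger equation accounting for the beam splitter normalizes to the deterministic drift of the quantum filter for joint homodyne detection and photon counting.) -/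

import Mathlib

open ContinuousLinearMap

/-- Normalization of the corrected unnormalized SSE (accounting for the beam splitter)
gives the deterministic drift of the quantum filter for joint homodyne detection and
photon counting. -/
theorem stmt_12 {𝓗 : Type*} [NormedAddCommGroup 𝓗] [InnerProductSpace ℂ 𝓗]
    [CompleteSpace 𝓗] (H L : 𝓗 →L[ℂ] 𝓗) (hH : IsSelfAdjoint H)
    (ψ : 𝓗) (hψ : ‖ψ‖ = 1) (r : ℝ) (hr0 : 0 ≤ r) (hr1 : r ≤ 1) :
    let exp : (𝓗 →L[ℂ] 𝓗) → ℂ := fun X => inner ℂ ψ (X ψ)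
    let m : ℂ := exp (L + adjoint L)
    let A : 𝓗 →L[ℂ] 𝓗 :=
      -(Complex.I • H) - (1 / 2 : ℂ) • (adjoint L * L) + ((1 - (r : ℂ) ^ 2) * m) • L
    let C : 𝓗 →L[ℂ] 𝓗 := (Real.sqrt (1 - r ^ 2) : ℂ) • L
    let Ahat : ℂ := (3 / 8) * (exp (C + adjoint C)) ^ 2 - (1 / 2) * exp (A + adjoint A)
      - (1 / 2) * exp (adjoint C * C)
    let Chat : ℂ := -(1 / 2) * exp (C + adjoint C)
    m.im = 0 ∧
    A + Ahat • (1 : 𝓗 →L[ℂ] 𝓗) + Chat • C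
      = -(Complex.I • H) - (1 / 2 : ℂ) • (adjoint L * L)
        + ((1 / 2) * (1 - (r : ℂ) ^ 2) * m) • L
        + ((1 / 2) * (r : ℂ) ^ 2 * exp (adjoint L * L)
            - (1 / 8) * (1 - (r : ℂ) ^ 2) * m ^ 2) • (1 : 𝓗 →L[ℂ] 𝓗) := by
  intro exp m A C Ahat Chat
  set s : ℂ := (Real.sqrt (1 - r ^ 2) : ℂ) with hs
  have h1r : (0:ℝ) ≤ 1 - r ^ 2 := by nlinarith
  have hs2 : s ^ 2 = 1 - (r : ℂ) ^ 2 := by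
    rw [hs, ← Complex.ofReal_pow, Real.sq_sqrt h1r]
    push_cast; ring
  have hsconj : (starRingEnd ℂ) s = s := Complex.conj_ofReal _
  have hmr : (starRingEnd ℂ) m = m := by
    simp only [m, exp, add_apply, inner_add_right, map_add, inner_conj_symm,
      adjoint_inner_right, adjoint_inner_left]
    ring
  have hm' : m = (inner ℂ ψ (L ψ) : ℂ) + inner ℂ ψ (adjoint L ψ) := by
    simp [m, exp, inner_add_right]
  have hCadj : adjoint C = s • adjoint L := by
    rw [← star_eq_adjoint, ← star_eq_adjoint, show C = s • L from rfl, star_smul,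
      Complex.star_def, hsconj]
  have hexpC : exp (C + adjoint C) = s * m := by
    simp only [C, hCadj, exp, add_apply, smul_apply, inner_add_right, inner_smul_right, hm']
    ring
  have hexpCC : exp (adjoint C * C) = (1 - (r:ℂ)^2) * exp (adjoint L * L) := by
    simp only [C, hCadj, exp, mul_apply_eq_comp, smul_apply, map_smul, inner_smul_right, ← hs2]
    ring
  have hAadj : adjoint A = Complex.I • H + (-(1/2 : ℂ)) • (adjoint L * L)
      + ((1 - (r:ℂ)^2) * m) • adjoint L := by
    rw [← star_eq_adjoint]
    simp only [A, star_add, star_sub, star_neg, star_smul, star_mul, star_eq_adjoint,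
      adjoint_adjoint, hH.adjoint_eq, Complex.star_def, map_mul, map_sub, map_one, map_pow,
      Complex.conj_I, Complex.conj_ofReal, hmr, map_div₀, map_ofNat]
    module
  have hexpA : exp (A + adjoint A) = -exp (adjoint L * L) + (1 - (r:ℂ)^2) * m * m := by
    simp only [A, hAadj, exp, add_apply, sub_apply, neg_apply, smul_apply,
      inner_add_right, inner_sub_right, inner_neg_right, inner_smul_right]
    rw [hm']; ring
  have hAhat : Ahat = (1/2)*(r:ℂ)^2 * exp (adjoint L * L) - (1/8)*(1-(r:ℂ)^2)*m^2 := by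
    simp only [Ahat, hexpC, hexpA, hexpCC]
    linear_combination (3/8 * m^2) * hs2
  have hCsmul : Chat • C = (-(1/2)*(1-(r:ℂ)^2)*m) • L := by
    simp only [Chat, hexpC, C, smul_smul]
    congr 1
    linear_combination (-(m/2)) * hs2
  refine ⟨Complex.conj_eq_iff_im.mp hmr, ?_⟩
  rw [hCsmul, hAhat]
  simp only [A]
  module
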